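/- arXiv:1201.4140 — 2 statements merged into one kernel-verified Lean document; each statement's English description precedes it below -/
import Mathlib

section
/- Let n and h be positive integers with h ∣ n and h ∣ 24. Then the map ρ_{n|h} : Γ₀(n) → ℂˣ sending the matrix (a b; c d) to exp(−2πi·c·d/(n·h)) is a group homomorphism, i.e. ρ_{n|h}(γγ') = ρ_{n|h}(γ)·ρ_{n|h}(γ') for all γ, γ' ∈ Γ₀(n) and ρ_{n|h} maps the identity matrix to 1. -/
/-- Units square to 1 mod a divisor of 24 (integer version). -/
lemma sq_one_of_dvd24 (h : ℕ) (h24 : h ∣ 24) (x y : ℤ) (hxy : (h : ℤ) ∣ x * y - 1) :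
    (h : ℤ) ∣ y * y - 1 := by
  have hle : h ≤ 24 := Nat.le_of_dvd (by norm_num) h24
  have key : ∀ u v : ZMod h, u * v = 1 → v * v = 1 := by
    interval_cases h <;> first
      | (exfalso; omega)
      | decide
  have h1 : ((x * y - 1 : ℤ) : ZMod h) = 0 :=
    (ZMod.intCast_zmod_eq_zero_iff_dvd _ _).2 hxy
  have h2 : (x : ZMod h) * (y : ZMod h) = 1 := by
    push_cast at h1; linear_combination h1
  have h3 : ((y * y - 1 : ℤ) : ZMod h) = 0 := by
    push_cast
    linear_combination key _ _ h2
  exact (ZMod.intCast_zmod_eq_zero_iff_dvd _ _).1 h3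

/-- The function `ρ_{n|h}` on `Γ₀(n)` sending `(a b; c d)` to `exp(-2πi·c·d/(n·h))`. -/
noncomputable def rhoChar (n h : ℕ) (γ : CongruenceSubgroup.Gamma0 n) : ℂ :=
  Complex.exp (-2 * Real.pi * Complex.I *
      ((((γ : Matrix.SpecialLinearGroup (Fin 2) ℤ) 1 0 : ℤ) : ℂ) *
        (((γ : Matrix.SpecialLinearGroup (Fin 2) ℤ) 1 1 : ℤ) : ℂ)) /
    ((n : ℂ) * (h : ℂ)))

/-- For positive integers `n`, `h` with `h ∣ n` and `h ∣ 24`, the map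
`ρ_{n|h} : Γ₀(n) → ℂˣ`, `(a b; c d) ↦ exp(-2πi·c·d/(n·h))`, is a group homomorphism. -/
theorem stmt_5 (n h : ℕ) (hn : 0 < n) (hh : 0 < h) (hdvd : h ∣ n) (h24 : h ∣ 24) :
    (∀ γ γ' : CongruenceSubgroup.Gamma0 n,
      rhoChar n h (γ * γ') = rhoChar n h γ * rhoChar n h γ') ∧
    rhoChar n h 1 = 1 := by
  constructor
  · intro γ γ'
    set A : Matrix.SpecialLinearGroup (Fin 2) ℤ := (γ : Matrix.SpecialLinearGroup (Fin 2) ℤ)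
      with hA
    set B : Matrix.SpecialLinearGroup (Fin 2) ℤ := (γ' : Matrix.SpecialLinearGroup (Fin 2) ℤ)
      with hB
    have hAB : ((γ * γ' : CongruenceSubgroup.Gamma0 n) : Matrix.SpecialLinearGroup (Fin 2) ℤ)
        = A * B := rfl
    set a := A 0 0; set b := A 0 1; set c := A 1 0; set d := A 1 1
    set a' := B 0 0; set b' := B 0 1; set c' := B 1 0; set d' := B 1 1
    have hc'' : (A * B) 1 0 = c * a' + d * c' := by
      simp [Matrix.SpecialLinearGroup.coe_mul, Matrix.mul_apply, Fin.sum_univ_two]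
      rfl
    have hd'' : (A * B) 1 1 = c * b' + d * d' := by
      simp [Matrix.SpecialLinearGroup.coe_mul, Matrix.mul_apply, Fin.sum_univ_two]
      rfl
    -- divisibilities
    have hcn : (n : ℤ) ∣ c :=
      (ZMod.intCast_zmod_eq_zero_iff_dvd _ _).1 (CongruenceSubgroup.Gamma0_mem.1 γ.2)
    have hc'n : (n : ℤ) ∣ c' :=
      (ZMod.intCast_zmod_eq_zero_iff_dvd _ _).1 (CongruenceSubgroup.Gamma0_mem.1 γ'.2)
    have hdetA : a * d - b * c = 1 := by
      have := A.2
      rw [Matrix.det_fin_two] at this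
      linear_combination this
    have hdetB : a' * d' - b' * c' = 1 := by
      have := B.2
      rw [Matrix.det_fin_two] at this
      linear_combination this
    have hhd : (h : ℤ) ∣ d * d - 1 := by
      apply sq_one_of_dvd24 h h24 a d
      obtain ⟨u, hu⟩ : (h : ℤ) ∣ c := dvd_trans (Int.natCast_dvd_natCast.2 hdvd) hcn
      exact ⟨b * u, by linear_combination hdetA + b * hu⟩
    obtain ⟨c₀, hc0⟩ := hcn
    obtain ⟨c₀', hc0'⟩ := hc'n
    obtain ⟨m, hm⟩ : (h : ℤ) ∣ (n : ℤ) := Int.natCast_dvd_natCast.2 hdvd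
    obtain ⟨e, he⟩ := hhd
    have h1 : (c * a' + d * c') * (c * b' + d * d') - c * d - c' * d'
        = c * c * a' * b' + 2 * c * d * b' * c' + c' * d' * (d * d - 1) := by
      linear_combination (c * d) * hdetB
    obtain ⟨k, hk⟩ : ((n : ℤ) * h) ∣
        ((c * a' + d * c') * (c * b' + d * d') - c * d - c' * d') := by
      rw [h1, hc0, hc0']
      exact ⟨m * c₀ ^ 2 * a' * b' + 2 * m * c₀ * d * b' * c₀' + c₀' * d' * e, by
        linear_combination ((n : ℤ) * c₀ * c₀ * a' * b' + 2 * (n : ℤ) * c₀ * d * b' * c₀') * hm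
          + (n : ℤ) * c₀' * d' * he⟩
    -- analytic part
    have hnh : ((n : ℂ) * (h : ℂ)) ≠ 0 :=
      mul_ne_zero (Nat.cast_ne_zero.2 hn.ne') (Nat.cast_ne_zero.2 hh.ne')
    have hkc : ((c : ℂ) * a' + d * c') * ((c : ℂ) * b' + d * d') - c * d - c' * d'
        = (n : ℂ) * h * k := by exact_mod_cast congrArg (Int.cast : ℤ → ℂ) hk
    have harg : -2 * (Real.pi : ℂ) * Complex.I *
          (((c * a' + d * c' : ℤ) : ℂ) * ((c * b' + d * d' : ℤ) : ℂ)) / ((n : ℂ) * (h : ℂ))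
        = (-2 * (Real.pi : ℂ) * Complex.I * (((c : ℤ) : ℂ) * ((d : ℤ) : ℂ)) / ((n : ℂ) * (h : ℂ))
            + -2 * (Real.pi : ℂ) * Complex.I * (((c' : ℤ) : ℂ) * ((d' : ℤ) : ℂ)) /
              ((n : ℂ) * (h : ℂ)))
          + ((-k : ℤ) : ℂ) * (2 * (Real.pi : ℂ) * Complex.I) := by
      push_cast
      have hcan := mul_div_cancel_left₀ (k : ℂ) hnh
      linear_combination (-2 * (Real.pi : ℂ) * Complex.I / ((n : ℂ) * (h : ℂ))) * hkc
        + (-2 * (Real.pi : ℂ) * Complex.I) * hcan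
    unfold rhoChar
    rw [hAB, hc'', hd'', harg, Complex.exp_add, Complex.exp_int_mul_two_pi_mul_I, mul_one,
      Complex.exp_add]
  · unfold rhoChar
    have h0 : ((1 : CongruenceSubgroup.Gamma0 n) : Matrix.SpecialLinearGroup (Fin 2) ℤ) 1 0
        = 0 := by
      simp [Matrix.SpecialLinearGroup.coe_one, Matrix.one_apply]
    rw [h0]
    simp
end

section
/- Let w be a real number with w > 0 and let f : ℍ → ℂ be holomorphic on the upper half-plane ℍ with sup_{τ∈ℍ} (Im τ)^{(2−w)/2}·|f(τ)| < ∞. For τ = x + iy ∈ ℍ define g*(τ) = (4i)^{w−1} ∫₀^∞ (i(t+2y))^{−w} · conj(f(τ+it)) · i dt, using the principal branch of complex powers (this is the non-holomorphic period integral (4i)^{w−1}∫_{−conj(τ)}^{∞}(z+τ)^{−w} conj(f(−conj(z))) dz along the vertical path z = −conj(τ) + it). Then for every τ ∈ ℍ the integral converges absolutely, g* is real-differentiable on ℍ, and its Wirtinger derivative satisfies (∂g*/∂τ̄)(τ) := ½(∂/∂x + i·∂/∂y)g*(τ) = (4i)^{w−1}·(2iy)^{−w}· conj(f(τ)). In particular,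 for any holomorphic h : ℍ → ℂ the completion ĥ = h + g* satisfies (∂ĥ/∂τ̄)(τ) = (4i)^{w−1}(2i·Im τ)^{−w}· conj(f(τ)), so ∂ĥ/∂τ̄ is, up to the explicit nonzero factor (4i)^{w−1}(2i·Im τ)^{−w}, the complex conjugate of the shadow f. -/
open MeasureTheory Set Complex Metric

-- rpow helper
lemma rpow_sandwich {p q r : ℝ} (hq : 0 < q) (h1 : q/2 ≤ r) (h2 : r ≤ 15*q) :
    r ^ p ≤ ((1/2:ℝ) ^ p + 15 ^ p) * q ^ p := by
  have hr : 0 < r := lt_of_lt_of_le (by positivity) h1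
  rcases le_or_gt 0 p with hp | hp
  · have : r ^ p ≤ (15*q) ^ p := Real.rpow_le_rpow hr.le h2 hp
    calc r ^ p ≤ (15*q)^p := this
      _ = 15^p * q^p := Real.mul_rpow (by norm_num) hq.le
      _ ≤ ((1/2:ℝ)^p + 15^p) * q^p := by
          have : (0:ℝ) ≤ (1/2:ℝ)^p := Real.rpow_nonneg (by norm_num) p
          nlinarith [Real.rpow_nonneg hq.le p]
  · have : r ^ p ≤ (q/2) ^ p := Real.rpow_le_rpow_of_nonpos (by positivity) h1 hp.le
    calc r ^ p ≤ (q/2)^p := this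
      _ = (1/2:ℝ)^p * q^p := by
          rw [← Real.mul_rpow (by norm_num) hq.le]; ring_nf
      _ ≤ ((1/2:ℝ)^p + 15^p) * q^p := by
          have : (0:ℝ) ≤ (15:ℝ)^p := Real.rpow_nonneg (by norm_num) p
          nlinarith [Real.rpow_nonneg hq.le p]

lemma integrableOn_shift_rpow {β e : ℝ} (hβ : 0 < β) (he : e < -1) :
    IntegrableOn (fun t : ℝ => (t + β) ^ e) (Set.Ioi (0:ℝ)) := by
  have h := integrableOn_Ioi_rpow_of_lt he hβ
  have hm : MeasurePreserving (fun t : ℝ => t + β) volume volume :=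
    measurePreserving_add_right volume β
  have hemb : MeasurableEmbedding (fun t : ℝ => t + β) :=
    (MeasurableEquiv.addRight β).measurableEmbedding
  have := (hm.integrableOn_comp_preimage hemb).2 h
  have hpre : (fun t : ℝ => t + β) ⁻¹' (Set.Ioi β) = Set.Ioi 0 := by
    ext t; simp
  rw [hpre] at this
  exact this

lemma f_norm_bound {f : ℂ → ℂ} {C w : ℝ}
    (hb : ∀ τ : ℂ, 0 < τ.im → τ.im ^ ((2 - w) / 2) * ‖f τ‖ ≤ C)
    {z : ℂ} (hz : 0 < z.im) : ‖f z‖ ≤ C * z.im ^ ((w - 2) / 2) := by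
  have h := hb z hz
  have hpos : (0:ℝ) < z.im ^ ((2 - w) / 2) := Real.rpow_pos_of_pos hz _
  have : ‖f z‖ ≤ C / z.im ^ ((2 - w) / 2) := by
    rw [le_div_iff₀ hpos]; linarith [mul_comm (z.im ^ ((2 - w) / 2)) (‖f z‖) ▸ h]
  calc ‖f z‖ ≤ C / z.im ^ ((2 - w) / 2) := this
    _ = C * z.im ^ ((w - 2) / 2) := by
        rw [div_eq_mul_inv, ← Real.rpow_neg hz.le]; ring_nf

lemma deriv_bound {f : ℂ → ℂ} {C w : ℝ} (hC0 : 0 ≤ C)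
    (hf : DifferentiableOn ℂ f {z : ℂ | 0 < z.im})
    (hb : ∀ τ : ℂ, 0 < τ.im → τ.im ^ ((2 - w) / 2) * ‖f τ‖ ≤ C)
    {z : ℂ} (hz : 0 < z.im) :
    ‖deriv f z‖ ≤ C * ((z.im/2) ^ ((w-2)/2) + (3*z.im/2) ^ ((w-2)/2)) / (z.im/2) := by
  have hR : (0:ℝ) < z.im / 2 := by linarith
  have hsub : closedBall z (z.im/2) ⊆ {ζ : ℂ | 0 < ζ.im} := by
    intro ζ hζ
    have : |(ζ - z).im| ≤ ‖ζ - z‖ := Complex.abs_im_le_norm _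
    simp only [mem_closedBall, Complex.dist_eq] at hζ
    have : |(ζ - z).im| ≤ z.im / 2 := le_trans this hζ
    have := abs_le.1 this
    simp only [Complex.sub_im] at this
    simp only [Set.mem_setOf_eq]; linarith [this.1]
  have hd : DiffContOnCl ℂ f (ball z (z.im/2)) := by
    refine ⟨hf.mono ?_, (hf.continuousOn).mono ?_⟩
    · exact (ball_subset_closedBall).trans hsub
    · exact closure_ball_subset_closedBall.trans hsub
  refine norm_deriv_le_of_forall_mem_sphere_norm_le hR hd fun ζ hζ => ?_
  have hζim : 0 < ζ.im := hsub (sphere_subset_closedBall hζ)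
  have him : z.im / 2 ≤ ζ.im ∧ ζ.im ≤ 3 * z.im / 2 := by
    have h1 : |(ζ - z).im| ≤ ‖ζ - z‖ := Complex.abs_im_le_norm _
    simp only [mem_sphere_iff_norm] at hζ
    rw [hζ] at h1
    have := abs_le.1 h1
    simp only [Complex.sub_im] at this
    constructor <;> linarith [this.1, this.2]
  have h2 : ‖f ζ‖ ≤ C * ζ.im ^ ((w-2)/2) := f_norm_bound hb hζim
  refine h2.trans ?_
  have key : ζ.im ^ ((w-2)/2) ≤ (z.im/2) ^ ((w-2)/2) + (3*z.im/2) ^ ((w-2)/2) := by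
    rcases le_or_gt 0 ((w-2)/2) with hp | hp
    · have := Real.rpow_le_rpow hζim.le him.2 hp
      have h0 : (0:ℝ) ≤ (z.im/2) ^ ((w-2)/2) := Real.rpow_nonneg hR.le _
      linarith
    · have := Real.rpow_le_rpow_of_nonpos hR him.1 hp.le
      have h0 : (0:ℝ) ≤ (3*z.im/2) ^ ((w-2)/2) := Real.rpow_nonneg (by linarith) _
      linarith
  calc C * ζ.im ^ ((w-2)/2) ≤ C * ((z.im/2) ^ ((w-2)/2) + (3*z.im/2) ^ ((w-2)/2)) :=
        mul_le_mul_of_nonneg_left key hC0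

noncomputable def cconj : ℂ →L[ℝ] ℂ := Complex.conjCLE.toContinuousLinearMap

@[simp] lemma cconj_apply (z : ℂ) : cconj z = (starRingEnd ℂ) z := rfl


noncomputable def wd (w : ℝ) (f : ℂ → ℂ) (t : ℝ) (τ : ℂ) : ℂ →L[ℝ] ℂ :=
  (( -(w:ℂ) * (Complex.I * ((t : ℂ) + 2 * τ.im)) ^ (-(w:ℂ)-1) *
      (starRingEnd ℂ) (f (τ + Complex.I * t)) * Complex.I) •
        (ContinuousLinearMap.id ℝ ℂ - cconj))
  + (((Complex.I * ((t : ℂ) + 2 * τ.im)) ^ (-(w:ℂ)) *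
      (starRingEnd ℂ) (deriv f (τ + Complex.I * t)) * Complex.I) • cconj)

lemma wd_apply (w : ℝ) (f : ℂ → ℂ) (t : ℝ) (τ : ℂ) (v : ℂ) :
    wd w f t τ v =
      -(w:ℂ) * (Complex.I * ((t : ℂ) + 2 * τ.im)) ^ (-(w:ℂ)-1) *
        (starRingEnd ℂ) (f (τ + Complex.I * t)) * Complex.I * (v - (starRingEnd ℂ) v)
      + (Complex.I * ((t : ℂ) + 2 * τ.im)) ^ (-(w:ℂ)) *
        (starRingEnd ℂ) (deriv f (τ + Complex.I * t)) * Complex.I * (starRingEnd ℂ) v := by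
  simp [wd, ContinuousLinearMap.sub_apply, smul_eq_mul]

lemma im_aux (τ : ℂ) (t : ℝ) : (τ + Complex.I * t).im = τ.im + t := by simp

lemma u_im (τ : ℂ) (t : ℝ) : (Complex.I * ((t : ℂ) + 2 * τ.im)).im = t + 2 * τ.im := by
  simp [Complex.mul_im]

lemma u_slit {τ : ℂ} {t : ℝ} (ht : 0 ≤ t) (hτ : 0 < τ.im) :
    (Complex.I * ((t : ℂ) + 2 * τ.im)) ∈ Complex.slitPlane := by
  rw [Complex.mem_slitPlane_iff, u_im]
  right; positivity

lemma hasFDerivAt_integrand {w : ℝ} {f : ℂ → ℂ}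
    (hf : DifferentiableOn ℂ f {z : ℂ | 0 < z.im}) {t : ℝ} (ht : 0 ≤ t)
    {τ : ℂ} (hτ : 0 < τ.im) :
    HasFDerivAt (fun τ : ℂ => (Complex.I * ((t : ℂ) + 2 * τ.im)) ^ (-(w:ℂ)) *
        (starRingEnd ℂ) (f (τ + Complex.I * t)) * Complex.I) (wd w f t τ) τ := by
  have hopen : IsOpen {z : ℂ | 0 < z.im} := isOpen_lt continuous_const Complex.continuous_im
  have hz : 0 < (τ + Complex.I * t).im := by rw [im_aux]; linarith
  have hfz : HasDerivAt f (deriv f (τ + Complex.I * t)) (τ + Complex.I * t) :=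
    ((hf.differentiableAt (hopen.mem_nhds hz)).hasDerivAt)
  have hconj : HasFDerivAt (fun z : ℂ => (starRingEnd ℂ) z) cconj τ := cconj.hasFDerivAt
  have h1 : HasFDerivAt (fun τ : ℂ => Complex.I * ((t : ℂ) + 2 * τ.im))
      (ContinuousLinearMap.id ℝ ℂ - cconj) τ := by
    have key : (fun τ : ℂ => Complex.I * ((t : ℂ) + 2 * τ.im))
        = fun τ : ℂ => Complex.I * (t : ℂ) + (τ - (starRingEnd ℂ) τ) := by
      funext z
      rw [Complex.sub_conj]
      push_cast
      ring
    rw [key]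
    exact ((hasFDerivAt_id τ).sub cconj.hasFDerivAt).const_add (Complex.I * t)
  have hcp : HasFDerivAt (fun τ : ℂ => (Complex.I * ((t : ℂ) + 2 * τ.im)) ^ (-(w:ℂ)))
      ((((1 : ℂ →L[ℂ] ℂ).smulRight
          (-(w:ℂ) * (Complex.I * ((t : ℂ) + 2 * τ.im)) ^ (-(w:ℂ)-1))).restrictScalars ℝ).comp
        (ContinuousLinearMap.id ℝ ℂ - cconj)) τ := by
    have := ((Complex.hasStrictDerivAt_cpow_const (c := -(w:ℂ))
      (u_slit ht hτ)).hasDerivAt.hasFDerivAt.restrictScalars ℝ).comp τ h1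
    exact this
  have hin : HasFDerivAt (fun τ : ℂ => τ + Complex.I * t) (ContinuousLinearMap.id ℝ ℂ) τ :=
    (hasFDerivAt_id τ).add_const _
  have hfc : HasFDerivAt (fun τ : ℂ => f (τ + Complex.I * t))
      ((((1 : ℂ →L[ℂ] ℂ).smulRight (deriv f (τ + Complex.I * t))).restrictScalars ℝ).comp
        (ContinuousLinearMap.id ℝ ℂ)) τ :=
    (hfz.hasFDerivAt.restrictScalars ℝ).comp τ hin
  have hq : HasFDerivAt (fun τ : ℂ => (starRingEnd ℂ) (f (τ + Complex.I * t)))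
      (cconj.comp ((((1 : ℂ →L[ℂ] ℂ).smulRight
          (deriv f (τ + Complex.I * t))).restrictScalars ℝ).comp (ContinuousLinearMap.id ℝ ℂ))) τ :=
    cconj.hasFDerivAt.comp τ hfc
  have hmul := (hcp.mul hq).mul_const Complex.I
  refine hmul.congr_fderiv ?_
  ext v
  rw [wd_apply]
  simp [ContinuousLinearMap.smul_apply, ContinuousLinearMap.comp_apply,
    ContinuousLinearMap.smulRight_apply, ContinuousLinearMap.sub_apply, smul_eq_mul]
  ring

noncomputable def Kc (p : ℝ) : ℝ := (1/2:ℝ) ^ p + 15 ^ p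

lemma Kc_pos (p : ℝ) : 0 < Kc p := by
  have := Real.rpow_pos_of_pos (by norm_num : (0:ℝ) < 1/2) p
  have := Real.rpow_pos_of_pos (by norm_num : (0:ℝ) < 15) p
  unfold Kc; linarith

lemma rpow_sandwich' {p q r : ℝ} (hq : 0 < q) (h1 : q/2 ≤ r) (h2 : r ≤ 15*q) :
    r ^ p ≤ Kc p * q ^ p := by
  have hr : 0 < r := lt_of_lt_of_le (by positivity) h1
  unfold Kc
  rcases le_or_gt 0 p with hp | hp
  · have h3 : r ^ p ≤ (15*q) ^ p := Real.rpow_le_rpow hr.le h2 hp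
    have h4 : (15*q:ℝ)^p = 15^p * q^p := Real.mul_rpow (by norm_num) hq.le
    have h5 : (0:ℝ) ≤ (1/2:ℝ)^p := Real.rpow_nonneg (by norm_num) p
    nlinarith [Real.rpow_nonneg hq.le p]
  · have h3 : r ^ p ≤ (q/2) ^ p := Real.rpow_le_rpow_of_nonpos (by positivity) h1 hp.le
    have h4 : (q/2:ℝ)^p = (1/2:ℝ)^p * q^p := by
      rw [← Real.mul_rpow (by norm_num) hq.le]; ring_nf
    have h5 : (0:ℝ) ≤ (15:ℝ)^p := Real.rpow_nonneg (by norm_num) p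
    nlinarith [Real.rpow_nonneg hq.le p]

lemma norm_wd_le (w : ℝ) (f : ℂ → ℂ) (t : ℝ) (τ : ℂ) :
    ‖wd w f t τ‖ ≤
      2 * ‖(-(w:ℂ)) * (Complex.I * ((t : ℂ) + 2 * τ.im)) ^ (-(w:ℂ)-1) *
          (starRingEnd ℂ) (f (τ + Complex.I * t)) * Complex.I‖
      + ‖(Complex.I * ((t : ℂ) + 2 * τ.im)) ^ (-(w:ℂ)) *
          (starRingEnd ℂ) (deriv f (τ + Complex.I * t)) * Complex.I‖ := by
  set A := (-(w:ℂ)) * (Complex.I * ((t : ℂ) + 2 * τ.im)) ^ (-(w:ℂ)-1) *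
      (starRingEnd ℂ) (f (τ + Complex.I * t)) * Complex.I with hA
  set B := (Complex.I * ((t : ℂ) + 2 * τ.im)) ^ (-(w:ℂ)) *
      (starRingEnd ℂ) (deriv f (τ + Complex.I * t)) * Complex.I with hB
  refine ContinuousLinearMap.opNorm_le_bound _ (by positivity) fun v => ?_
  have h1 : wd w f t τ v = A * (v - (starRingEnd ℂ) v) + B * (starRingEnd ℂ) v := by
    rw [wd_apply, hA, hB]
  rw [h1]
  have h2 : ‖v - (starRingEnd ℂ) v‖ ≤ 2 * ‖v‖ := by
    have := norm_sub_le v ((starRingEnd ℂ) v)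
    have hc : ‖(starRingEnd ℂ) v‖ = ‖v‖ := RCLike.norm_conj v
    linarith
  have hc : ‖(starRingEnd ℂ) v‖ = ‖v‖ := RCLike.norm_conj v
  calc ‖A * (v - (starRingEnd ℂ) v) + B * (starRingEnd ℂ) v‖
      ≤ ‖A * (v - (starRingEnd ℂ) v)‖ + ‖B * (starRingEnd ℂ) v‖ := norm_add_le _ _
    _ = ‖A‖ * ‖v - (starRingEnd ℂ) v‖ + ‖B‖ * ‖v‖ := by
        rw [norm_mul A, norm_mul B, hc]
    _ ≤ ‖A‖ * (2 * ‖v‖) + ‖B‖ * ‖v‖ :=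
        add_le_add (mul_le_mul_of_nonneg_left h2 (norm_nonneg _)) le_rfl
    _ = (2 * ‖A‖ + ‖B‖) * ‖v‖ := by ring

noncomputable def Abig (w C : ℝ) : ℝ :=
  2 * (w * C * Kc (-w-1) * Kc ((w-2)/2)) + 2 * C * (Kc (-w) * Kc ((w-2)/2) * Kc (-1))

lemma wd_bound {w C : ℝ} (hw : 0 < w) (hC0 : 0 ≤ C) {f : ℂ → ℂ}
    (hf : DifferentiableOn ℂ f {z : ℂ | 0 < z.im})
    (hb : ∀ τ : ℂ, 0 < τ.im → τ.im ^ ((2 - w) / 2) * ‖f τ‖ ≤ C)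
    {τ₀ : ℂ} (hτ₀ : 0 < τ₀.im) {t : ℝ} (ht : 0 < t)
    {τ : ℂ} (hτ : τ ∈ ball τ₀ (τ₀.im/4)) :
    ‖wd w f t τ‖ ≤ Abig w C * (t + τ₀.im/2) ^ ((w-2)/2 - w - 1) := by
  set p : ℝ := (w-2)/2 with hp
  set q : ℝ := t + τ₀.im/2 with hqdef
  have hq : 0 < q := by positivity
  -- im bounds for τ in the ball
  have him : 3/4 * τ₀.im ≤ τ.im ∧ τ.im ≤ 5/4 * τ₀.im := by
    rw [mem_ball, Complex.dist_eq] at hτ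
    have h1 : |(τ - τ₀).im| ≤ ‖τ - τ₀‖ := Complex.abs_im_le_norm _
    have h2 := abs_le.1 (h1.trans hτ.le)
    simp only [Complex.sub_im] at h2
    constructor <;> linarith [h2.1, h2.2]
  have hτim : 0 < τ.im := by linarith [him.1]
  have hzim : (τ + Complex.I * t).im = τ.im + t := im_aux τ t
  have hzim_pos : 0 < (τ + Complex.I * t).im := by rw [hzim]; linarith
  set s : ℝ := t + 2 * τ.im with hsdef
  have hs : 0 < s := by positivity
  have hs1 : q / 2 ≤ s := by rw [hqdef, hsdef]; linarith [him.1]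
  have hs2 : s ≤ 15 * q := by rw [hqdef, hsdef]; linarith [him.2]
  have hzq1 : q / 2 ≤ (τ + Complex.I * t).im := by rw [hzim, hqdef]; linarith [him.1]
  have hzq2 : (τ + Complex.I * t).im ≤ 15 * q := by rw [hzim, hqdef]; linarith [him.2]
  -- abs of cpow terms
  have hu : (Complex.I * ((t : ℂ) + 2 * τ.im)) = Complex.I * ((s : ℝ) : ℂ) := by
    rw [hsdef]; push_cast; ring
  have habsu : ‖Complex.I * ((s : ℝ) : ℂ)‖ = s := by
    rw [norm_mul, Complex.norm_I, Complex.norm_of_nonneg hs.le, one_mul]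
  have hcp : ∀ r : ℝ, ‖(Complex.I * ((t : ℂ) + 2 * τ.im)) ^ ((r : ℝ) : ℂ)‖ = s ^ r := by
    intro r
    rw [hu, Complex.norm_cpow_real, habsu]
  have hcp1 : ‖(Complex.I * ((t : ℂ) + 2 * τ.im)) ^ (-(w:ℂ)-1)‖ = s ^ (-w-1) := by
    have he : (-(w:ℂ)-1) = ((-w-1 : ℝ) : ℂ) := by push_cast; ring
    rw [he, hcp]
  have hcp0 : ‖(Complex.I * ((t : ℂ) + 2 * τ.im)) ^ (-(w:ℂ))‖ = s ^ (-w) := by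
    have he : (-(w:ℂ)) = ((-w : ℝ) : ℂ) := by push_cast; ring
    rw [he, hcp]
  -- bound on A term
  have hfb : ‖f (τ + Complex.I * t)‖ ≤ C * (Kc p * q ^ p) := by
    have h1 : ‖f (τ + Complex.I * t)‖ ≤ C * (τ + Complex.I * t).im ^ p := f_norm_bound hb hzim_pos
    refine h1.trans (mul_le_mul_of_nonneg_left ?_ hC0)
    exact rpow_sandwich' hq hzq1 hzq2
  have hsand1 : s ^ (-w-1) ≤ Kc (-w-1) * q ^ (-w-1) := rpow_sandwich' hq (by linarith) hs2
  have hsand0 : s ^ (-w) ≤ Kc (-w) * q ^ (-w) := rpow_sandwich' hq (by linarith) hs2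
  have hTA : ‖(-(w:ℂ)) * (Complex.I * ((t : ℂ) + 2 * τ.im)) ^ (-(w:ℂ)-1) *
      (starRingEnd ℂ) (f (τ + Complex.I * t)) * Complex.I‖ ≤
      (w * C * Kc (-w-1) * Kc p) * q ^ (p - w - 1) := by
    have heq : ‖(-(w:ℂ)) * (Complex.I * ((t : ℂ) + 2 * τ.im)) ^ (-(w:ℂ)-1) *
        (starRingEnd ℂ) (f (τ + Complex.I * t)) * Complex.I‖ =
        w * (s ^ (-w-1)) * ‖f (τ + Complex.I * t)‖ := by
      simp only [norm_mul, Complex.norm_I, Complex.norm_conj, mul_one,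
        Complex.norm_of_nonneg hw.le, hcp1, norm_neg]
    rw [heq]
    calc w * s ^ (-w-1) * ‖f (τ + Complex.I * t)‖
        ≤ w * (Kc (-w-1) * q ^ (-w-1)) * (C * (Kc p * q ^ p)) := by
          refine mul_le_mul (mul_le_mul_of_nonneg_left hsand1 hw.le) hfb
            (norm_nonneg _) ?_
          exact mul_nonneg hw.le (mul_nonneg (Kc_pos _).le (Real.rpow_nonneg hq.le _))
      _ = (w * C * Kc (-w-1) * Kc p) * (q ^ (-w-1) * q ^ p) := by ring
      _ = (w * C * Kc (-w-1) * Kc p) * q ^ (p - w - 1) := by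
          rw [← Real.rpow_add hq]; congr 1; ring
  -- bound on B term
  have hdb : ‖deriv f (τ + Complex.I * t)‖ ≤
      C * (Kc p * q ^ p + Kc p * q ^ p) * (Kc (-1) * q ^ (-1 : ℝ)) := by
    have h1 := deriv_bound hC0 hf hb hzim_pos
    set zim := (τ + Complex.I * t).im with hzdef
    have hhalf : (zim/2) ^ p ≤ Kc p * q ^ p :=
      rpow_sandwich' hq (by linarith) (by linarith)
    have h3half : (3*zim/2) ^ p ≤ Kc p * q ^ p :=
      rpow_sandwich' hq (by linarith) (by linarith)
    have hinv : (zim/2)⁻¹ ≤ Kc (-1) * q ^ (-1 : ℝ) := by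
      have : (zim/2)⁻¹ = (zim/2) ^ (-1 : ℝ) := by
        rw [Real.rpow_neg_one]
      rw [this]
      exact rpow_sandwich' hq (by linarith) (by linarith)
    have hnum : C * ((zim/2) ^ p + (3*zim/2) ^ p) ≤ C * (Kc p * q ^ p + Kc p * q ^ p) :=
      mul_le_mul_of_nonneg_left (add_le_add hhalf h3half) hC0
    have hdiv : C * ((zim/2) ^ p + (3*zim/2) ^ p) / (zim/2)
        = C * ((zim/2) ^ p + (3*zim/2) ^ p) * (zim/2)⁻¹ := by rw [div_eq_mul_inv]
    refine h1.trans ?_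
    rw [hdiv]
    have hnn1 : 0 ≤ C * ((zim/2) ^ p + (3*zim/2) ^ p) := by
      have : (0:ℝ) ≤ (zim/2) ^ p := Real.rpow_nonneg (by linarith) _
      have : (0:ℝ) ≤ (3*zim/2) ^ p := Real.rpow_nonneg (by linarith) _
      positivity
    have hnn2 : (0:ℝ) ≤ (zim/2)⁻¹ := by positivity
    refine mul_le_mul hnum hinv hnn2 ?_
    have h1 : (0:ℝ) ≤ Kc p * q ^ p :=
      mul_nonneg (Kc_pos _).le (Real.rpow_nonneg hq.le _)
    positivity
  have hTB : ‖(Complex.I * ((t : ℂ) + 2 * τ.im)) ^ (-(w:ℂ)) *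
      (starRingEnd ℂ) (deriv f (τ + Complex.I * t)) * Complex.I‖ ≤
      (2 * C * (Kc (-w) * Kc p * Kc (-1))) * q ^ (p - w - 1) := by
    have heq : ‖(Complex.I * ((t : ℂ) + 2 * τ.im)) ^ (-(w:ℂ)) *
        (starRingEnd ℂ) (deriv f (τ + Complex.I * t)) * Complex.I‖ =
        s ^ (-w) * ‖deriv f (τ + Complex.I * t)‖ := by
      simp only [norm_mul, Complex.norm_I, Complex.norm_conj, mul_one, hcp0]
    rw [heq]
    calc s ^ (-w) * ‖deriv f (τ + Complex.I * t)‖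
        ≤ (Kc (-w) * q ^ (-w)) *
            (C * (Kc p * q ^ p + Kc p * q ^ p) * (Kc (-1) * q ^ (-1 : ℝ))) := by
          refine mul_le_mul hsand0 hdb (norm_nonneg _) ?_
          exact mul_nonneg (Kc_pos _).le (Real.rpow_nonneg hq.le _)
      _ = (2 * C * (Kc (-w) * Kc p * Kc (-1))) * (q ^ (-w) * (q ^ p * q ^ (-1:ℝ))) := by ring
      _ = (2 * C * (Kc (-w) * Kc p * Kc (-1))) * q ^ (p - w - 1) := by
          rw [← Real.rpow_add hq, ← Real.rpow_add hq]; congr 1; ring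
  calc ‖wd w f t τ‖ ≤ _ := norm_wd_le w f t τ
    _ ≤ 2 * ((w * C * Kc (-w-1) * Kc p) * q ^ (p - w - 1)) +
        (2 * C * (Kc (-w) * Kc p * Kc (-1))) * q ^ (p - w - 1) := by linarith
    _ = Abig w C * q ^ (p - w - 1) := by unfold Abig; rw [hp]; ring

lemma integrand_contOn {w : ℝ} {f : ℂ → ℂ}
    (hf : DifferentiableOn ℂ f {z : ℂ | 0 < z.im}) {τ : ℂ} (hτ : 0 < τ.im) :
    ContinuousOn (fun t : ℝ => (Complex.I * ((t : ℂ) + 2 * τ.im)) ^ (-(w:ℂ)) *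
      (starRingEnd ℂ) (f (τ + Complex.I * t)) * Complex.I) (Set.Ici 0) := by
  have hbase : Continuous (fun t : ℝ => Complex.I * ((t : ℂ) + 2 * τ.im)) := by
    continuity
  have h1 : ContinuousOn (fun t : ℝ => (Complex.I * ((t : ℂ) + 2 * τ.im)) ^ (-(w:ℂ)))
      (Set.Ici 0) := by
    intro t ht
    have hcc : ContinuousAt (fun z : ℂ => z ^ (-(w:ℂ))) (Complex.I * ((t:ℂ) + 2 * τ.im)) :=
      continuousAt_cpow_const (u_slit ht hτ)
    exact (ContinuousAt.comp (f := fun t : ℝ => Complex.I * ((t:ℂ) + 2 * τ.im)) (x := t) hcc hbase.continuousAt).continuousWithinAt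
  have h2 : ContinuousOn (fun t : ℝ => (starRingEnd ℂ) (f (τ + Complex.I * t)))
      (Set.Ici 0) := by
    have hmaps : Set.MapsTo (fun t : ℝ => τ + Complex.I * t) (Set.Ici 0) {z : ℂ | 0 < z.im} := by
      intro t ht
      simp only [Set.mem_setOf_eq, im_aux]
      have : (0:ℝ) ≤ t := ht
      linarith
    exact Complex.continuous_conj.comp_continuousOn
      (hf.continuousOn.comp (by continuity : Continuous fun t : ℝ => τ + Complex.I * t).continuousOn hmaps)
  exact (h1.mul h2).mul continuousOn_const

lemma integrand_norm_bound {w C : ℝ} (hw : 0 < w) {f : ℂ → ℂ}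
    (hb : ∀ τ : ℂ, 0 < τ.im → τ.im ^ ((2 - w) / 2) * ‖f τ‖ ≤ C)
    {τ : ℂ} (hτ : 0 < τ.im) {t : ℝ} (ht : 0 < t) :
    ‖(Complex.I * ((t : ℂ) + 2 * τ.im)) ^ (-(w:ℂ)) *
      (starRingEnd ℂ) (f (τ + Complex.I * t)) * Complex.I‖ ≤
      C * (t + τ.im) ^ ((w-2)/2 - w) := by
  have hzim : (τ + Complex.I * t).im = τ.im + t := im_aux τ t
  have hzpos : 0 < (τ + Complex.I * t).im := by rw [hzim]; linarith
  set s : ℝ := t + 2 * τ.im with hsdef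
  have hs : 0 < s := by positivity
  have hu : (Complex.I * ((t : ℂ) + 2 * τ.im)) = Complex.I * ((s : ℝ) : ℂ) := by
    rw [hsdef]; push_cast; ring
  have habsu : ‖Complex.I * ((s : ℝ) : ℂ)‖ = s := by
    rw [norm_mul, Complex.norm_I, Complex.norm_of_nonneg hs.le, one_mul]
  have hcp0 : ‖(Complex.I * ((t : ℂ) + 2 * τ.im)) ^ (-(w:ℂ))‖ = s ^ (-w) := by
    have he : (-(w:ℂ)) = ((-w : ℝ) : ℂ) := by push_cast; ring
    rw [he, hu, Complex.norm_cpow_real, habsu]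
  have heq : ‖(Complex.I * ((t : ℂ) + 2 * τ.im)) ^ (-(w:ℂ)) *
      (starRingEnd ℂ) (f (τ + Complex.I * t)) * Complex.I‖ =
      s ^ (-w) * ‖f (τ + Complex.I * t)‖ := by
    simp only [norm_mul, Complex.norm_I, Complex.norm_conj, mul_one, hcp0]
  rw [heq]
  have hty : 0 < t + τ.im := by linarith
  have h1 : s ^ (-w) ≤ (t + τ.im) ^ (-w) :=
    Real.rpow_le_rpow_of_nonpos hty (by rw [hsdef]; linarith) (by linarith)
  have h2 : ‖f (τ + Complex.I * t)‖ ≤ C * (t + τ.im) ^ ((w-2)/2) := by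
    have := f_norm_bound hb hzpos
    rw [hzim] at this
    rw [add_comm t τ.im]
    exact this
  calc s ^ (-w) * ‖f (τ + Complex.I * t)‖
      ≤ (t + τ.im) ^ (-w) * (C * (t + τ.im) ^ ((w-2)/2)) := by
        refine mul_le_mul h1 h2 (norm_nonneg _) (Real.rpow_nonneg hty.le _)
    _ = C * ((t + τ.im) ^ (-w) * (t + τ.im) ^ ((w-2)/2)) := by ring
    _ = C * (t + τ.im) ^ ((w-2)/2 - w) := by
        rw [← Real.rpow_add hty]; congr 1; ring

lemma integrand_integrableOn {w C : ℝ} (hw : 0 < w) {f : ℂ → ℂ}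
    (hf : DifferentiableOn ℂ f {z : ℂ | 0 < z.im})
    (hb : ∀ τ : ℂ, 0 < τ.im → τ.im ^ ((2 - w) / 2) * ‖f τ‖ ≤ C)
    {τ : ℂ} (hτ : 0 < τ.im) :
    MeasureTheory.IntegrableOn
      (fun t : ℝ => (Complex.I * ((t : ℂ) + 2 * τ.im)) ^ (-(w:ℂ)) *
        (starRingEnd ℂ) (f (τ + Complex.I * t)) * Complex.I) (Set.Ioi 0) := by
  have hmeas : AEStronglyMeasurable
      (fun t : ℝ => (Complex.I * ((t : ℂ) + 2 * τ.im)) ^ (-(w:ℂ)) *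
        (starRingEnd ℂ) (f (τ + Complex.I * t)) * Complex.I)
      (volume.restrict (Set.Ioi 0)) :=
    ((integrand_contOn hf hτ).mono Ioi_subset_Ici_self).aestronglyMeasurable measurableSet_Ioi
  have hC0 : 0 ≤ C := by
    have := hb Complex.I (by simp)
    have h0 : (0:ℝ) ≤ (Complex.I.im : ℝ) ^ ((2 - w) / 2) * ‖f Complex.I‖ :=
      mul_nonneg (Real.rpow_nonneg (by simp) _) (norm_nonneg _)
    linarith
  have hint : IntegrableOn (fun t : ℝ => C * (t + τ.im) ^ ((w-2)/2 - w)) (Set.Ioi 0) :=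
    (integrableOn_shift_rpow hτ (by linarith : (w-2)/2 - w < -1)).const_mul C
  refine Integrable.mono' hint hmeas ?_
  filter_upwards [ae_restrict_mem measurableSet_Ioi] with t ht
  exact integrand_norm_bound hw hb hτ ht

lemma cpow_contOn {c : ℂ} {τ : ℂ} (hτ : 0 < τ.im) :
    ContinuousOn (fun t : ℝ => (Complex.I * ((t : ℂ) + 2 * τ.im)) ^ c) (Set.Ici 0) := by
  have hbase : Continuous (fun t : ℝ => Complex.I * ((t : ℂ) + 2 * τ.im)) := by continuity
  intro t ht
  have hcc : ContinuousAt (fun z : ℂ => z ^ c) (Complex.I * ((t:ℂ) + 2 * τ.im)) :=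
    continuousAt_cpow_const (u_slit ht hτ)
  exact (ContinuousAt.comp (f := fun t : ℝ => Complex.I * ((t:ℂ) + 2 * τ.im)) (x := t)
    hcc hbase.continuousAt).continuousWithinAt

lemma conj_f_contOn {f : ℂ → ℂ} (hfc : ContinuousOn f {z : ℂ | 0 < z.im})
    {τ : ℂ} (hτ : 0 < τ.im) :
    ContinuousOn (fun t : ℝ => (starRingEnd ℂ) (f (τ + Complex.I * t))) (Set.Ici 0) := by
  have hmaps : Set.MapsTo (fun t : ℝ => τ + Complex.I * t) (Set.Ici 0) {z : ℂ | 0 < z.im} := by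
    intro t ht
    simp only [Set.mem_setOf_eq, im_aux]
    have : (0:ℝ) ≤ t := ht
    linarith
  exact Complex.continuous_conj.comp_continuousOn
    (hfc.comp (by continuity : Continuous fun t : ℝ => τ + Complex.I * t).continuousOn hmaps)

lemma wd_aesm {w : ℝ} {f : ℂ → ℂ}
    (hf : DifferentiableOn ℂ f {z : ℂ | 0 < z.im}) {τ : ℂ} (hτ : 0 < τ.im) :
    AEStronglyMeasurable (fun t : ℝ => wd w f t τ) (volume.restrict (Set.Ioi 0)) := by
  have m1 : AEStronglyMeasurable
      (fun t : ℝ => -(w:ℂ) * (Complex.I * ((t : ℂ) + 2 * τ.im)) ^ (-(w:ℂ)-1) *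
        (starRingEnd ℂ) (f (τ + Complex.I * t)) * Complex.I)
      (volume.restrict (Set.Ioi 0)) := by
    have : ContinuousOn (fun t : ℝ => -(w:ℂ) * (Complex.I * ((t : ℂ) + 2 * τ.im)) ^ (-(w:ℂ)-1) *
        (starRingEnd ℂ) (f (τ + Complex.I * t)) * Complex.I) (Set.Ici 0) :=
      ((continuousOn_const.mul (cpow_contOn hτ)).mul (conj_f_contOn hf.continuousOn hτ)).mul
        continuousOn_const
    exact ((this.mono Ioi_subset_Ici_self).aestronglyMeasurable measurableSet_Ioi)
  have m2 : AEStronglyMeasurable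
      (fun t : ℝ => (Complex.I * ((t : ℂ) + 2 * τ.im)) ^ (-(w:ℂ)) *
        (starRingEnd ℂ) (deriv f (τ + Complex.I * t)) * Complex.I)
      (volume.restrict (Set.Ioi 0)) := by
    have hcd : AEStronglyMeasurable (fun t : ℝ => deriv f (τ + Complex.I * t))
        (volume.restrict (Set.Ioi 0)) := by
      have : Measurable (fun t : ℝ => τ + Complex.I * t) := by measurability
      exact ((stronglyMeasurable_deriv f).comp_measurable this).aestronglyMeasurable
    have hcj : AEStronglyMeasurable (fun t : ℝ => (starRingEnd ℂ) (deriv f (τ + Complex.I * t)))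
        (volume.restrict (Set.Ioi 0)) :=
      Complex.continuous_conj.comp_aestronglyMeasurable hcd
    have hcp : AEStronglyMeasurable (fun t : ℝ => (Complex.I * ((t : ℂ) + 2 * τ.im)) ^ (-(w:ℂ)))
        (volume.restrict (Set.Ioi 0)) :=
      ((cpow_contOn hτ).mono Ioi_subset_Ici_self).aestronglyMeasurable measurableSet_Ioi
    exact (hcp.mul hcj).mul aestronglyMeasurable_const
  exact (m1.smul aestronglyMeasurable_const).add (m2.smul aestronglyMeasurable_const)

lemma key_deriv {w C : ℝ} (hw : 0 < w) {f : ℂ → ℂ}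
    (hf : DifferentiableOn ℂ f {z : ℂ | 0 < z.im})
    (hb : ∀ τ : ℂ, 0 < τ.im → τ.im ^ ((2 - w) / 2) * ‖f τ‖ ≤ C)
    {τ₀ : ℂ} (hτ₀ : 0 < τ₀.im) :
    MeasureTheory.Integrable (fun t : ℝ => wd w f t τ₀) (volume.restrict (Set.Ioi 0)) ∧
    HasFDerivAt (fun τ : ℂ => ∫ t in Set.Ioi (0:ℝ),
        (Complex.I * ((t : ℂ) + 2 * τ.im)) ^ (-(w:ℂ)) *
          (starRingEnd ℂ) (f (τ + Complex.I * t)) * Complex.I)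
      (∫ t in Set.Ioi (0:ℝ), wd w f t τ₀) τ₀ := by
  have hC0 : 0 ≤ C := by
    have := hb Complex.I (by simp)
    have h0 : (0:ℝ) ≤ (Complex.I.im : ℝ) ^ ((2 - w) / 2) * ‖f Complex.I‖ :=
      mul_nonneg (Real.rpow_nonneg (by simp) _) (norm_nonneg _)
    linarith
  have hε : (0:ℝ) < τ₀.im / 4 := by linarith
  set bound : ℝ → ℝ := fun t => Abig w C * (t + τ₀.im/2) ^ ((w-2)/2 - w - 1) with hbdef
  have h_bound : ∀ᵐ t ∂(volume.restrict (Set.Ioi (0:ℝ))),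
      ∀ x ∈ ball τ₀ (τ₀.im/4), ‖wd w f t x‖ ≤ bound t := by
    filter_upwards [ae_restrict_mem measurableSet_Ioi] with t ht x hx
    exact wd_bound hw hC0 hf hb hτ₀ ht hx
  have bound_int : Integrable bound (volume.restrict (Set.Ioi (0:ℝ))) :=
    (integrableOn_shift_rpow (by linarith : (0:ℝ) < τ₀.im/2)
      (by linarith : (w-2)/2 - w - 1 < -1)).const_mul _
  have h_diff : ∀ᵐ (t : ℝ) ∂(volume.restrict (Set.Ioi (0:ℝ))),
      ∀ x ∈ ball τ₀ (τ₀.im/4), HasFDerivAt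
        (fun τ : ℂ => (Complex.I * ((t : ℂ) + 2 * τ.im)) ^ (-(w:ℂ)) *
          (starRingEnd ℂ) (f (τ + Complex.I * t)) * Complex.I) (wd w f t x) x := by
    filter_upwards [ae_restrict_mem measurableSet_Ioi] with t ht x hx
    have hxim : 0 < x.im := by
      rw [mem_ball, Complex.dist_eq] at hx
      have h1 : |(x - τ₀).im| ≤ ‖x - τ₀‖ := Complex.abs_im_le_norm _
      have h2 := abs_le.1 (h1.trans hx.le)
      simp only [Complex.sub_im] at h2
      linarith [h2.1]
    exact hasFDerivAt_integrand hf (le_of_lt ht) hxim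
  have hF_meas : ∀ᶠ x in nhds τ₀, AEStronglyMeasurable
      (fun t : ℝ => (Complex.I * ((t : ℂ) + 2 * x.im)) ^ (-(w:ℂ)) *
        (starRingEnd ℂ) (f (x + Complex.I * t)) * Complex.I)
      (volume.restrict (Set.Ioi 0)) := by
    have hopen : IsOpen {z : ℂ | 0 < z.im} := isOpen_lt continuous_const Complex.continuous_im
    filter_upwards [hopen.mem_nhds hτ₀] with x hx
    exact ((integrand_contOn hf hx).mono Ioi_subset_Ici_self).aestronglyMeasurable
      measurableSet_Ioi
  have hF'_meas : AEStronglyMeasurable (fun t : ℝ => wd w f t τ₀)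
      (volume.restrict (Set.Ioi 0)) := wd_aesm hf hτ₀
  have hF_int := integrand_integrableOn hw hf hb hτ₀
  have hd := hasFDerivAt_integral_of_dominated_of_fderiv_le
    (F := fun (x : ℂ) (t : ℝ) => (Complex.I * ((t : ℂ) + 2 * x.im)) ^ (-(w:ℂ)) *
      (starRingEnd ℂ) (f (x + Complex.I * t)) * Complex.I)
    (F' := fun (x : ℂ) (t : ℝ) => wd w f t x)
    (μ := volume.restrict (Set.Ioi 0)) (x₀ := τ₀) (bound := bound)
    (ball_mem_nhds τ₀ hε) hF_meas hF_int hF'_meas h_bound bound_int h_diff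
  refine ⟨?_, hd⟩
  refine Integrable.mono' bound_int hF'_meas ?_
  filter_upwards [ae_restrict_mem measurableSet_Ioi] with t ht
  exact wd_bound hw hC0 hf hb hτ₀ ht (mem_ball_self hε)

lemma ftc_part {w C : ℝ} (hw : 0 < w) {f : ℂ → ℂ}
    (hf : DifferentiableOn ℂ f {z : ℂ | 0 < z.im})
    (hb : ∀ τ : ℂ, 0 < τ.im → τ.im ^ ((2 - w) / 2) * ‖f τ‖ ≤ C)
    {τ : ℂ} (hτ : 0 < τ.im) :
    ∫ t in Set.Ioi (0:ℝ), (1/2 : ℂ) * (wd w f t τ 1 + Complex.I * wd w f t τ Complex.I)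
      = (2 * Complex.I * τ.im) ^ (-(w:ℂ)) * (starRingEnd ℂ) (f τ) := by
  have hC0 : 0 ≤ C := by
    have := hb Complex.I (by simp)
    have h0 : (0:ℝ) ≤ (Complex.I.im : ℝ) ^ ((2 - w) / 2) * ‖f Complex.I‖ :=
      mul_nonneg (Real.rpow_nonneg (by simp) _) (norm_nonneg _)
    linarith
  have hopen : IsOpen {z : ℂ | 0 < z.im} := isOpen_lt continuous_const Complex.continuous_im
  set B : ℝ → ℂ := fun t => (Complex.I * ((t:ℂ) + 2 * τ.im)) ^ (-(w:ℂ)) *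
    (starRingEnd ℂ) (f (τ + Complex.I * t)) with hBdef
  set B' : ℝ → ℂ := fun t =>
    -(1/2 : ℂ) * (wd w f t τ 1 + Complex.I * wd w f t τ Complex.I) with hB'def
  -- derivative of B on Ioi 0
  have hderiv : ∀ t ∈ Set.Ioi (0:ℝ), HasDerivAt B (B' t) t := by
    intro t ht
    have ht' : (0:ℝ) < t := ht
    have hre : HasDerivAt (fun s : ℝ => (s:ℂ)) 1 t := by
      exact (hasDerivAt_id t).ofReal_comp
    have hu : HasDerivAt (fun s : ℝ => Complex.I * ((s:ℂ) + 2 * τ.im)) (Complex.I * 1) t :=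
      (hre.add_const ((2:ℂ) * τ.im)).const_mul Complex.I
    have hP0 : HasDerivAt (fun z : ℂ => z ^ (-(w:ℂ)))
        (-(w:ℂ) * (Complex.I * ((t:ℂ) + 2 * τ.im)) ^ (-(w:ℂ)-1))
        (Complex.I * ((t:ℂ) + 2 * τ.im)) :=
      (Complex.hasStrictDerivAt_cpow_const (u_slit ht'.le hτ)).hasDerivAt
    have hP : HasDerivAt (fun s : ℝ => (Complex.I * ((s:ℂ) + 2 * τ.im)) ^ (-(w:ℂ)))
        ((((1 : ℂ →L[ℂ] ℂ).smulRight
            (-(w:ℂ) * (Complex.I * ((t:ℂ) + 2 * τ.im)) ^ (-(w:ℂ)-1))).restrictScalars ℝ)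
          (Complex.I * 1)) t :=
      (hP0.hasFDerivAt.restrictScalars ℝ).comp_hasDerivAt (l := fun z : ℂ => z ^ (-(w:ℂ))) t hu
    have hzim : 0 < (τ + Complex.I * t).im := by rw [im_aux]; linarith
    have hfd : HasDerivAt f (deriv f (τ + Complex.I * t)) (τ + Complex.I * t) :=
      (hf.differentiableAt (hopen.mem_nhds hzim)).hasDerivAt
    have hin : HasDerivAt (fun s : ℝ => τ + Complex.I * (s:ℂ)) (Complex.I * 1) t :=
      (hre.const_mul Complex.I).const_add τ
    have hQf : HasDerivAt (fun s : ℝ => f (τ + Complex.I * s))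
        ((((1 : ℂ →L[ℂ] ℂ).smulRight (deriv f (τ + Complex.I * t))).restrictScalars ℝ)
          (Complex.I * 1)) t :=
      (hfd.hasFDerivAt.restrictScalars ℝ).comp_hasDerivAt t hin
    have hQ : HasDerivAt (fun s : ℝ => (starRingEnd ℂ) (f (τ + Complex.I * s)))
        (cconj ((((1 : ℂ →L[ℂ] ℂ).smulRight (deriv f (τ + Complex.I * t))).restrictScalars ℝ)
          (Complex.I * 1))) t :=
      cconj.hasFDerivAt.comp_hasDerivAt t hQf
    have hBd := hP.mul hQ
    refine hBd.congr_deriv ?_; symm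
    rw [hB'def]
    simp only [wd_apply, cconj_apply, ContinuousLinearMap.coe_restrictScalars',
      ContinuousLinearMap.smulRight_apply, ContinuousLinearMap.one_apply, smul_eq_mul,
      map_mul, Complex.conj_I, map_one]
    ring_nf
    have hI3 : Complex.I ^ 3 = -Complex.I := by
      rw [pow_succ, Complex.I_sq]; ring
    rw [hI3]
    ring
  -- continuity at 0
  have hcont : ContinuousWithinAt B (Set.Ici 0) 0 := by
    have : ContinuousOn B (Set.Ici 0) :=
      (cpow_contOn hτ).mul (conj_f_contOn hf.continuousOn hτ)
    exact this 0 Set.self_mem_Ici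
  -- integrability of B'
  have hwdint := (key_deriv hw hf hb hτ).1
  have hint : IntegrableOn B' (Set.Ioi 0) := by
    have h1 : Integrable (fun t : ℝ => wd w f t τ 1) (volume.restrict (Set.Ioi 0)) :=
      hwdint.apply_continuousLinearMap 1
    have h2 : Integrable (fun t : ℝ => wd w f t τ Complex.I) (volume.restrict (Set.Ioi 0)) :=
      hwdint.apply_continuousLinearMap Complex.I
    exact ((h1.add (h2.const_mul Complex.I)).const_mul (-(1/2 : ℂ)))
  -- limit at infinity
  have htend : Filter.Tendsto B Filter.atTop (nhds 0) := by
    have hbnd : ∀ᶠ t in Filter.atTop, ‖B t‖ ≤ C * (t + τ.im) ^ ((w-2)/2 - w) := by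
      filter_upwards [Filter.eventually_gt_atTop 0] with t ht
      have := integrand_norm_bound hw hb hτ ht (f := f)
      have heq : ‖(Complex.I * ((t : ℂ) + 2 * τ.im)) ^ (-(w:ℂ)) *
          (starRingEnd ℂ) (f (τ + Complex.I * t)) * Complex.I‖ = ‖B t‖ := by
        rw [hBdef]; simp [norm_mul]
      rw [heq] at this
      exact this
    have hlim : Filter.Tendsto (fun t : ℝ => C * (t + τ.im) ^ ((w-2)/2 - w))
        Filter.atTop (nhds 0) := by
      have h1 : Filter.Tendsto (fun t : ℝ => t + τ.im) Filter.atTop Filter.atTop :=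
        Filter.tendsto_atTop_add_const_right _ _ Filter.tendsto_id
      have h2 : Filter.Tendsto (fun x : ℝ => x ^ (-(w - (w-2)/2))) Filter.atTop (nhds 0) :=
        tendsto_rpow_neg_atTop (by linarith)
      have h3 := (h2.comp h1).const_mul C
      have hexp : ((w-2)/2 - w) = -(w - (w-2)/2) := by ring
      simp only [hexp]
      simpa [mul_zero, Function.comp] using h3
    exact squeeze_zero_norm' hbnd hlim
  have hftc := MeasureTheory.integral_Ioi_of_hasDerivAt_of_tendsto hcont hderiv hint htend
  have hkey : (fun t : ℝ => (1/2 : ℂ) * (wd w f t τ 1 + Complex.I * wd w f t τ Complex.I))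
      = fun t => -B' t := by
    funext t; rw [hB'def]; ring
  rw [hkey, MeasureTheory.integral_neg, hftc]
  have hB0 : B 0 = (2 * Complex.I * τ.im) ^ (-(w:ℂ)) * (starRingEnd ℂ) (f τ) := by
    rw [hBdef]
    have h1 : Complex.I * (((0:ℝ):ℂ) + 2 * τ.im) = 2 * Complex.I * τ.im := by push_cast; ring
    have h2 : τ + Complex.I * ((0:ℝ):ℂ) = τ := by push_cast; ring
    simp only [h1, h2]
  rw [← hB0]; ring

/-- Let `w > 0` and let `f` be holomorphic on the upper half-plane with
`(Im τ)^((2-w)/2) · |f(τ)|` bounded.  Define the non-holomorphic period integral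
`G(τ) = (4i)^(w-1) ∫₀^∞ (i(t+2y))^(-w) · conj(f(τ+it)) · i dt` (i.e. the integral
`(4i)^(w-1) ∫_{-τ̄}^∞ (z+τ)^(-w) conj(f(-z̄)) dz` along the vertical path `z = -τ̄+it`).
Then for every `τ ∈ ℍ` the integrand is integrable on `(0,∞)`, `G` is real-differentiable,
its Wirtinger derivative `∂G/∂τ̄ = ½(∂/∂x + i∂/∂y)G` equals
`(4i)^(w-1)·(2i·Im τ)^(-w)·conj(f(τ))`, and the same holds for the completion `h + G` of
any holomorphic `h` on the upper half-plane. -/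
theorem stmt_6 (w : ℝ) (hw : 0 < w) (f : ℂ → ℂ)
    (hf : DifferentiableOn ℂ f {z : ℂ | 0 < z.im})
    (C : ℝ)
    (hbound : ∀ τ : ℂ, 0 < τ.im → τ.im ^ ((2 - w) / 2) * ‖f τ‖ ≤ C)
    (G : ℂ → ℂ)
    (hG : ∀ τ : ℂ, G τ = (4 * Complex.I) ^ ((w : ℂ) - 1) *
      ∫ t in Set.Ioi (0 : ℝ),
        (Complex.I * ((t : ℂ) + 2 * τ.im)) ^ (-(w : ℂ)) *
          (starRingEnd ℂ) (f (τ + Complex.I * t)) * Complex.I) :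
    (∀ τ : ℂ, 0 < τ.im → MeasureTheory.IntegrableOn
        (fun t : ℝ => (Complex.I * ((t : ℂ) + 2 * τ.im)) ^ (-(w : ℂ)) *
          (starRingEnd ℂ) (f (τ + Complex.I * t)) * Complex.I) (Set.Ioi 0)) ∧
    (∀ τ : ℂ, 0 < τ.im → DifferentiableAt ℝ G τ) ∧
    (∀ τ : ℂ, 0 < τ.im →
      (1 / 2 : ℂ) * (fderiv ℝ G τ 1 + Complex.I * fderiv ℝ G τ Complex.I) =
        (4 * Complex.I) ^ ((w : ℂ) - 1) * (2 * Complex.I * τ.im) ^ (-(w : ℂ)) *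
          (starRingEnd ℂ) (f τ)) ∧
    (∀ h : ℂ → ℂ, DifferentiableOn ℂ h {z : ℂ | 0 < z.im} → ∀ τ : ℂ, 0 < τ.im →
      (1 / 2 : ℂ) * (fderiv ℝ (fun s => h s + G s) τ 1 +
          Complex.I * fderiv ℝ (fun s => h s + G s) τ Complex.I) =
        (4 * Complex.I) ^ ((w : ℂ) - 1) * (2 * Complex.I * τ.im) ^ (-(w : ℂ)) *
          (starRingEnd ℂ) (f τ)) := by
  have hGeq : G = fun τ : ℂ => (4 * Complex.I) ^ ((w : ℂ) - 1) *
      ∫ t in Set.Ioi (0 : ℝ),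
        (Complex.I * ((t : ℂ) + 2 * τ.im)) ^ (-(w : ℂ)) *
          (starRingEnd ℂ) (f (τ + Complex.I * t)) * Complex.I := funext hG
  set c : ℂ := (4 * Complex.I) ^ ((w : ℂ) - 1) with hc
  have hGd : ∀ τ : ℂ, 0 < τ.im →
      HasFDerivAt G (c • ∫ t in Set.Ioi (0:ℝ), wd w f t τ) τ := by
    intro τ hτ
    rw [hGeq]
    exact ((key_deriv hw hf hbound hτ).2).const_mul c
  -- Wirtinger derivative of G
  have hwirt : ∀ τ : ℂ, 0 < τ.im →
      (1 / 2 : ℂ) * (fderiv ℝ G τ 1 + Complex.I * fderiv ℝ G τ Complex.I) =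
        c * (2 * Complex.I * τ.im) ^ (-(w : ℂ)) * (starRingEnd ℂ) (f τ) := by
    intro τ hτ
    have hwdint := (key_deriv hw hf hbound hτ).1
    have hfd := (hGd τ hτ).fderiv
    rw [hfd]
    have hap : ∀ v : ℂ, (c • ∫ t in Set.Ioi (0:ℝ), wd w f t τ) v =
        c * ∫ t in Set.Ioi (0:ℝ), wd w f t τ v := by
      intro v
      rw [ContinuousLinearMap.smul_apply, smul_eq_mul,
        ContinuousLinearMap.integral_apply hwdint]
    rw [hap 1, hap Complex.I]
    have h1int : MeasureTheory.Integrable (fun t : ℝ => wd w f t τ 1)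
        (volume.restrict (Set.Ioi 0)) := hwdint.apply_continuousLinearMap 1
    have h2int : MeasureTheory.Integrable (fun t : ℝ => wd w f t τ Complex.I)
        (volume.restrict (Set.Ioi 0)) := hwdint.apply_continuousLinearMap Complex.I
    have hcomb : ∫ t in Set.Ioi (0:ℝ),
          (1/2 : ℂ) * (wd w f t τ 1 + Complex.I * wd w f t τ Complex.I)
        = (1/2 : ℂ) * ((∫ t in Set.Ioi (0:ℝ), wd w f t τ 1)
            + Complex.I * ∫ t in Set.Ioi (0:ℝ), wd w f t τ Complex.I) := by
      rw [MeasureTheory.integral_const_mul]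
      rw [MeasureTheory.integral_add h1int (h2int.const_mul Complex.I)]
      rw [MeasureTheory.integral_const_mul]
    have hftc := ftc_part hw hf hbound hτ
    rw [hcomb] at hftc
    set X : ℂ := ∫ t in Set.Ioi (0:ℝ), wd w f t τ 1 with hX
    set Y : ℂ := ∫ t in Set.Ioi (0:ℝ), wd w f t τ Complex.I with hY
    have hstep : (1/2 : ℂ) * (c * X + Complex.I * (c * Y))
        = c * ((1/2 : ℂ) * (X + Complex.I * Y)) := by ring
    rw [hstep, hftc]
    ring
  refine ⟨fun τ hτ => integrand_integrableOn hw hf hbound hτ,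
    fun τ hτ => (hGd τ hτ).differentiableAt, hwirt, ?_⟩
  intro h hh τ hτ
  have hopen : IsOpen {z : ℂ | 0 < z.im} := isOpen_lt continuous_const Complex.continuous_im
  have hhd : DifferentiableAt ℂ h τ := hh.differentiableAt (hopen.mem_nhds hτ)
  have hhR : HasFDerivAt h ((fderiv ℂ h τ).restrictScalars ℝ) τ :=
    hhd.hasFDerivAt.restrictScalars ℝ
  have hsum : HasFDerivAt (fun s => h s + G s)
      (((fderiv ℂ h τ).restrictScalars ℝ) + (c • ∫ t in Set.Ioi (0:ℝ), wd w f t τ)) τ :=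
    hhR.add (hGd τ hτ)
  rw [hsum.fderiv]
  simp only [ContinuousLinearMap.add_apply]
  have hL : ((fderiv ℂ h τ).restrictScalars ℝ) Complex.I
      = Complex.I * ((fderiv ℂ h τ).restrictScalars ℝ) 1 := by
    have h1 : ((fderiv ℂ h τ).restrictScalars ℝ) Complex.I = (fderiv ℂ h τ) Complex.I := rfl
    have h2 : ((fderiv ℂ h τ).restrictScalars ℝ) (1:ℂ) = (fderiv ℂ h τ) 1 := rfl
    rw [h1, h2]
    calc (fderiv ℂ h τ) Complex.I = (fderiv ℂ h τ) (Complex.I • (1:ℂ)) := by norm_num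
      _ = Complex.I • (fderiv ℂ h τ) 1 := ContinuousLinearMap.map_smul _ _ _
      _ = Complex.I * (fderiv ℂ h τ) 1 := by rw [smul_eq_mul]
  have hvan : (1 / 2 : ℂ) * (((fderiv ℂ h τ).restrictScalars ℝ) 1
      + Complex.I * ((fderiv ℂ h τ).restrictScalars ℝ) Complex.I) = 0 := by
    rw [hL]
    have : Complex.I * (Complex.I * ((fderiv ℂ h τ).restrictScalars ℝ) 1)
        = - ((fderiv ℂ h τ).restrictScalars ℝ) 1 := by
      rw [← mul_assoc, Complex.I_mul_I]; ring
    rw [this]; ring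
  have hW := hwirt τ hτ
  rw [(hGd τ hτ).fderiv] at hW
  set L1 := ((fderiv ℂ h τ).restrictScalars ℝ) (1:ℂ)
  set LI := ((fderiv ℂ h τ).restrictScalars ℝ) Complex.I
  set M1 := (c • ∫ t in Set.Ioi (0:ℝ), wd w f t τ) (1:ℂ)
  set MI := (c • ∫ t in Set.Ioi (0:ℝ), wd w f t τ) Complex.I
  have : (1/2 : ℂ) * (L1 + M1 + Complex.I * (LI + MI))
      = (1/2 : ℂ) * (L1 + Complex.I * LI) + (1/2 : ℂ) * (M1 + Complex.I * MI) := by ring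
  rw [this, hvan, zero_add, hW]
end
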